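/- Let K be a flag simplicial complex, let n ≥ 2, and let ∂Δ^n be the boundary of the standard n-simplex. Then there is no degree-preserving surjective algebra homomorphism φ : Λ(K) → Λ(∂Δ^n) of exterior face algebras over Z/2Z whose kernel is generated, as an ideal, by homogeneous elements of degrees 1 and 2. -/

import Mathlib

open MvPolynomial

def IsSimplicialComplex {V : Type*} (S : Set (Finset V)) : Prop :=
  ∀ s ∈ S, ∀ t ⊆ s, t ∈ S

def IsFlag {V : Type*} [DecidableEq V] (S : Set (Finset V)) : Prop :=
  ∀ s : Finset V, (∀ v ∈ s, ∀ w ∈ s, v ≠ w → ({v, w} : Finset V) ∈ S) → s ∈ S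

/-- The boundary of the standard `n`-simplex: faces are all proper subsets of `Fin (n+1)`. -/
def boundarySimplex (n : ℕ) : Set (Finset (Fin (n + 1))) :=
  {s | s ≠ Finset.univ}

/-- Defining ideal of the exterior face algebra over `ℤ/2ℤ` (characteristic-2 description). -/
noncomputable def extIdeal (m : ℕ) (S : Set (Finset (Fin m))) :
    Ideal (MvPolynomial (Fin m) (ZMod 2)) :=
  Ideal.span ({p | ∃ i : Fin m, p = X i ^ 2} ∪
    {p | ∃ s : Finset (Fin m), s ∉ S ∧ p = ∏ i ∈ s, X i})

/-- The exterior face algebra `Λ(K)` over `ℤ/2ℤ`. -/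
abbrev ExtFaceAlgebra (m : ℕ) (S : Set (Finset (Fin m))) : Type :=
  MvPolynomial (Fin m) (ZMod 2) ⧸ extIdeal m S

/-- Homogeneous degree-`k` part of the exterior face algebra. -/
noncomputable def degreePiece (m : ℕ) (S : Set (Finset (Fin m))) (k : ℕ) :
    Submodule (ZMod 2) (ExtFaceAlgebra m S) :=
  (MvPolynomial.homogeneousSubmodule (Fin m) (ZMod 2) k).map
    (Ideal.Quotient.mkₐ (ZMod 2) (extIdeal m S)).toLinearMap

/-- An algebra homomorphism of exterior face algebras is degree-preserving if it maps
homogeneous elements of degree `k` to homogeneous elements of degree `k`. -/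
def DegreePreserving {m₁ m₂ : ℕ} {S₁ : Set (Finset (Fin m₁))} {S₂ : Set (Finset (Fin m₂))}
    (φ : ExtFaceAlgebra m₁ S₁ →ₐ[ZMod 2] ExtFaceAlgebra m₂ S₂) : Prop :=
  ∀ k : ℕ, (degreePiece m₁ S₁ k).map φ.toLinearMap ≤ degreePiece m₂ S₂ k


-- helper 1: coefficient vanishing on spanned ideals
lemma span_coeff_zero {N : ℕ} {Gen : Set (MvPolynomial (Fin N) (ZMod 2))}
    {D : Set ((Fin N) →₀ ℕ)} (hD : ∀ d ∈ D, ∀ d' : (Fin N) →₀ ℕ, d' ≤ d → d' ∈ D)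
    (hGen : ∀ g ∈ Gen, ∀ d ∈ D, coeff d g = 0) :
    ∀ p ∈ Ideal.span Gen, ∀ d ∈ D, coeff d p = 0 := by
  let Z : Ideal (MvPolynomial (Fin N) (ZMod 2)) :=
  { carrier := {p | ∀ d ∈ D, coeff d p = 0}
    add_mem' := by
      intro a b ha hb d hd
      simp only [coeff_add, ha d hd, hb d hd, add_zero]
    zero_mem' := by intro d hd; simp
    smul_mem' := by
      intro c p hp d hd
      rw [smul_eq_mul, coeff_mul]
      apply Finset.sum_eq_zero
      intro x hx
      rw [Finset.HasAntidiagonal.mem_antidiagonal] at hx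
      have hle : x.2 ≤ d := by
        intro i
        have := congrFun (congrArg (fun f : (Fin N) →₀ ℕ => (f : Fin N → ℕ)) hx) i
        simp only [Finsupp.coe_add, Pi.add_apply] at this
        omega
      rw [hp x.2 (hD d hd x.2 hle), mul_zero] }
  intro p hp
  have hZ : Ideal.span Gen ≤ Z := Ideal.span_le.mpr (fun g hg => hGen g hg)
  exact hZ hp

lemma card_le_degree {N : ℕ} (d : Fin N →₀ ℕ) (h : ∀ i, d i ≠ 0) : N ≤ d.degree := by
  have hs : d.support = Finset.univ :=
    Finset.eq_univ_iff_forall.mpr (fun i => Finsupp.mem_support_iff.mpr (h i))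
  calc N = ∑ _i : Fin N, 1 := by simp
  _ ≤ ∑ i : Fin N, d i := Finset.sum_le_sum (fun i _ => Nat.one_le_iff_ne_zero.mpr (h i))
  _ = d.degree := by rw [Finsupp.degree_apply, hs]

noncomputable def uAll (N : ℕ) : Fin N →₀ ℕ := ∑ i : Fin N, Finsupp.single i 1

lemma uAll_apply {N : ℕ} (j : Fin N) : uAll N j = 1 := by
  rw [uAll, Finset.sum_apply']
  simp [Finsupp.single_apply]

lemma prod_X_univ (N : ℕ) :
    (∏ i : Fin N, (X i : MvPolynomial (Fin N) (ZMod 2))) = monomial (uAll N) 1 := by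
  rw [uAll]
  induction (Finset.univ : Finset (Fin N)) using Finset.induction with
  | empty => simp [monomial_zero']
  | insert _ _ h ih =>
    rw [Finset.prod_insert h, Finset.sum_insert h, ih, X, monomial_mul, one_mul]

lemma extIdeal_coeff_zero {n : ℕ} {p : MvPolynomial (Fin (n+1)) (ZMod 2)}
    (hp : p ∈ extIdeal (n+1) (boundarySimplex n)) (d : Fin (n+1) →₀ ℕ)
    (h1 : ∀ i, d i ≤ 1) (h0 : ∃ i, d i = 0) : coeff d p = 0 := by
  refine span_coeff_zero (D := {d | (∀ i, d i ≤ 1) ∧ ∃ i, d i = 0}) ?_ ?_ p hp d ⟨h1, h0⟩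
  · rintro d ⟨hd1, i0, hd0⟩ d' hle
    exact ⟨fun i => le_trans (hle i) (hd1 i), i0, Nat.le_zero.mp (hd0 ▸ hle i0)⟩
  · rintro g (⟨i, rfl⟩ | ⟨s, hs, rfl⟩) d ⟨hd1, i0, hd0⟩
    · rw [X_pow_eq_monomial, coeff_monomial, if_neg]
      rintro rfl
      have := hd1 i
      simp [Finsupp.single_eq_same] at this
    · have hsu : s = Finset.univ := by
        by_contra h; exact hs h
      subst hsu
      rw [show (∏ i ∈ Finset.univ, (X i : MvPolynomial (Fin (n+1)) (ZMod 2)))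
          = monomial (uAll (n+1)) 1 from prod_X_univ (n+1), coeff_monomial, if_neg]
      rintro rfl
      rw [uAll_apply] at hd0
      exact one_ne_zero hd0

noncomputable def sqIdeal (N : ℕ) : Ideal (MvPolynomial (Fin N) (ZMod 2)) :=
  Ideal.span {p | ∃ i : Fin N, p = X i ^ 2}

lemma sqIdeal_coeff_zero {N : ℕ} {p : MvPolynomial (Fin N) (ZMod 2)}
    (hp : p ∈ sqIdeal N) (d : Fin N →₀ ℕ) (h1 : ∀ i, d i ≤ 1) : coeff d p = 0 := by
  refine span_coeff_zero (D := {d | ∀ i, d i ≤ 1}) ?_ ?_ p hp d h1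
  · intro d hd d' hle i
    exact le_trans (hle i) (hd i)
  · rintro g ⟨i, rfl⟩ d hd
    rw [X_pow_eq_monomial, coeff_monomial, if_neg]
    rintro rfl
    have := hd i
    simp [Finsupp.single_eq_same] at this

lemma prod_X_not_mem_sqIdeal (N : ℕ) :
    (∏ i : Fin N, (X i : MvPolynomial (Fin N) (ZMod 2))) ∉ sqIdeal N := by
  intro h
  have := sqIdeal_coeff_zero h (uAll N) (fun i => le_of_eq (uAll_apply i))
  rw [prod_X_univ, coeff_monomial, if_pos rfl] at this
  exact one_ne_zero this

lemma extIdeal_homog_one {n : ℕ} (hn : 2 ≤ n) {q : MvPolynomial (Fin (n+1)) (ZMod 2)}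
    (hq : q.IsHomogeneous 1) (hmem : q ∈ extIdeal (n+1) (boundarySimplex n)) : q = 0 := by
  refine MvPolynomial.ext _ _ fun d => ?_
  rw [coeff_zero]
  by_cases hdeg : d.degree = 1
  · apply extIdeal_coeff_zero hmem
    · intro i; have := Finsupp.le_degree i d; omega
    · by_contra hall; push_neg at hall
      have := card_le_degree d hall
      omega
  · exact hq.coeff_eq_zero hdeg

lemma extIdeal_homog_two {n : ℕ} (hn : 2 ≤ n) {q : MvPolynomial (Fin (n+1)) (ZMod 2)}
    (hq : q.IsHomogeneous 2) (hmem : q ∈ extIdeal (n+1) (boundarySimplex n)) :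
    q ∈ sqIdeal (n+1) := by
  rw [← support_sum_monomial_coeff q]
  apply Ideal.sum_mem
  intro d hd
  have hc : coeff d q ≠ 0 := mem_support_iff.mp hd
  have hdeg : d.degree = 2 := by
    by_contra h; exact hc (hq.coeff_eq_zero h)
  by_cases h2 : ∃ i, 2 ≤ d i
  · obtain ⟨i, hi⟩ := h2
    have hle : Finsupp.single i 2 ≤ d := Finsupp.single_le_iff.mpr hi
    have hmono : monomial d (coeff d q) =
        monomial (d - Finsupp.single i 2) (coeff d q) * X i ^ 2 := by
      rw [X_pow_eq_monomial, monomial_mul, mul_one, tsub_add_cancel_of_le hle]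
    rw [hmono]
    exact Ideal.mul_mem_left _ _ (Ideal.subset_span ⟨i, rfl⟩)
  · push_neg at h2
    exfalso
    apply hc
    apply extIdeal_coeff_zero hmem
    · intro i; have := h2 i; omega
    · by_contra hall; push_neg at hall
      have := card_le_degree d hall; omega

lemma degree_one_lift {n : ℕ} (hn : 2 ≤ n) {K : ℕ} (hK : 1 < K)
    {r : ℕ → MvPolynomial (Fin (n+1)) (ZMod 2)} (hr : ∀ k, (r k).IsHomogeneous k)
    (i : Fin (n+1))
    (hmem : X i - (∑ k ∈ Finset.range K, r k) ∈ extIdeal (n+1) (boundarySimplex n)) :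
    r 1 = X i := by
  have hsplit : (∑ k ∈ Finset.range K, r k) = r 1 + ∑ k ∈ (Finset.range K).erase 1, r k :=
    (Finset.add_sum_erase _ _ (Finset.mem_range.mpr hK)).symm
  refine MvPolynomial.ext _ _ fun d => ?_
  by_cases hdeg : d.degree = 1
  · have hd1 : ∀ j, d j ≤ 1 := fun j => by have := Finsupp.le_degree j d; omega
    have hd0 : ∃ j, d j = 0 := by
      by_contra hall; push_neg at hall
      have := card_le_degree d hall; omega
    have h := extIdeal_coeff_zero hmem d hd1 hd0
    rw [coeff_sub, hsplit, coeff_add] at h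
    have hz : coeff d (∑ k ∈ (Finset.range K).erase 1, r k) = 0 := by
      rw [coeff_sum]
      apply Finset.sum_eq_zero
      intro k hk
      exact (hr k).coeff_eq_zero (by have := (Finset.mem_erase.mp hk).1; omega)
    rw [hz, add_zero] at h
    exact (sub_eq_zero.mp h).symm
  · rw [(hr 1).coeff_eq_zero hdeg, (isHomogeneous_X _ _).coeff_eq_zero hdeg]


/-- If `K` is a flag complex and `n ≥ 2`, there is no degree-preserving surjective algebra
homomorphism `Λ(K) → Λ(∂Δⁿ)` whose kernel is generated by homogeneous elements of degrees
1 and 2. -/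
theorem no_degree_preserving_surjection_onto_boundary
    (m : ℕ) (S : Set (Finset (Fin m)))
    (hcomplex : IsSimplicialComplex S) (hflag : IsFlag S)
    (n : ℕ) (hn : 2 ≤ n) :
    ¬ ∃ φ : ExtFaceAlgebra m S →ₐ[ZMod 2] ExtFaceAlgebra (n + 1) (boundarySimplex n),
      Function.Surjective φ ∧ DegreePreserving φ ∧
      ∃ G : Set (ExtFaceAlgebra m S),
        (∀ g ∈ G, g ∈ degreePiece m S 1 ∨ g ∈ degreePiece m S 2) ∧
        RingHom.ker φ = Ideal.span G := by
  rintro ⟨φ, hsurj, hdeg, G, hG, hker⟩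
  -- choose homogeneous degree-1 images of the variables
  have hlam : ∀ v : Fin m, ∃ r : MvPolynomial (Fin (n+1)) (ZMod 2),
      r.IsHomogeneous 1 ∧ Ideal.Quotient.mk (extIdeal (n+1) (boundarySimplex n)) r
        = φ (Ideal.Quotient.mk (extIdeal m S) (X v)) := by
    intro v
    have h1 : (Ideal.Quotient.mkₐ (ZMod 2) (extIdeal m S)).toLinearMap (X v)
        ∈ degreePiece m S 1 :=
      Submodule.mem_map_of_mem ((mem_homogeneousSubmodule _ _).mpr (isHomogeneous_X _ v))
    have h2 := hdeg 1 (Submodule.mem_map_of_mem (f := φ.toLinearMap) h1)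
    obtain ⟨r, hr, hreq⟩ := h2
    refine ⟨r, (mem_homogeneousSubmodule _ _).mp hr, ?_⟩
    simpa [Ideal.Quotient.mkₐ_eq_mk] using hreq
  choose lam hlamH hlamEq using hlam
  set τ : MvPolynomial (Fin m) (ZMod 2) →ₐ[ZMod 2] MvPolynomial (Fin (n+1)) (ZMod 2) :=
    aeval lam with hτdef
  have hfact : ∀ p : MvPolynomial (Fin m) (ZMod 2),
      φ (Ideal.Quotient.mk (extIdeal m S) p)
        = Ideal.Quotient.mk (extIdeal (n+1) (boundarySimplex n)) (τ p) := by
    have hcomp : φ.comp (Ideal.Quotient.mkₐ (ZMod 2) (extIdeal m S))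
        = (Ideal.Quotient.mkₐ (ZMod 2) (extIdeal (n+1) (boundarySimplex n))).comp τ := by
      apply MvPolynomial.algHom_ext
      intro v
      simp only [AlgHom.comp_apply, hτdef, aeval_X, Ideal.Quotient.mkₐ_eq_mk]
      exact (hlamEq v).symm
    intro p
    have := DFunLike.congr_fun hcomp p
    simpa [Ideal.Quotient.mkₐ_eq_mk] using this
  have htau : ∀ {k : ℕ} {p : MvPolynomial (Fin m) (ZMod 2)},
      p.IsHomogeneous k → (τ p).IsHomogeneous k := by
    intro k p hp
    have := hp.aeval lam (fun v => hlamH v); rw [one_mul] at this; exact this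
  have hkerEI : ∀ p : MvPolynomial (Fin m) (ZMod 2),
      Ideal.Quotient.mk (extIdeal m S) p ∈ Ideal.span G
        ↔ τ p ∈ extIdeal (n+1) (boundarySimplex n) := by
    intro p
    rw [← hker, RingHom.mem_ker]
    change φ (Ideal.Quotient.mk (extIdeal m S) p) = 0 ↔ _
    rw [hfact p, Ideal.Quotient.eq_zero_iff_mem]
  -- degree-one lifts of the variables of the target
  have hlift : ∀ i : Fin (n+1), ∃ p : MvPolynomial (Fin m) (ZMod 2), τ p = X i := by
    intro i
    obtain ⟨a, ha⟩ := hsurj (Ideal.Quotient.mk (extIdeal (n+1) (boundarySimplex n)) (X i))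
    obtain ⟨q, rfl⟩ := Ideal.Quotient.mk_surjective a
    rw [hfact q] at ha
    have hmem : X i - τ q ∈ extIdeal (n+1) (boundarySimplex n) := by
      rw [← Ideal.Quotient.eq_zero_iff_mem, map_sub, sub_eq_zero]
      exact ha.symm
    set K := q.totalDegree + 2 with hKdef
    have hq : (∑ k ∈ Finset.range K, homogeneousComponent k q) = q := by
      have hstep : (∑ k ∈ Finset.range K, homogeneousComponent k q)
          = ∑ k ∈ Finset.range (q.totalDegree + 1), homogeneousComponent k q := by
        symm
        apply Finset.sum_subset (Finset.range_subset_range.mpr (by omega))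
        intro k _ hk'
        apply homogeneousComponent_eq_zero
        simp only [Finset.mem_range, not_lt] at hk'
        omega
      rw [hstep, sum_homogeneousComponent]
    refine ⟨homogeneousComponent 1 q, ?_⟩
    refine degree_one_lift hn (show 1 < K by omega)
      (r := fun k => τ (homogeneousComponent k q))
      (fun k => htau (homogeneousComponent_isHomogeneous k q)) i ?_
    have hsum : (∑ k ∈ Finset.range K, τ (homogeneousComponent k q)) = τ q := by
      rw [← map_sum, hq]
    rw [hsum]
    exact hmem
  choose ℓ hℓ using hlift
  set z : MvPolynomial (Fin m) (ZMod 2) := ∏ i : Fin (n+1), ℓ i with hzdef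
  have hτz : τ z = ∏ i : Fin (n+1), X i := by
    rw [hzdef, map_prod]
    exact Finset.prod_congr rfl (fun i _ => hℓ i)
  have hzker : Ideal.Quotient.mk (extIdeal m S) z ∈ Ideal.span G := by
    rw [hkerEI, hτz]
    exact Ideal.subset_span (Or.inr ⟨Finset.univ, by simp [boundarySimplex], rfl⟩)
  -- lift the generating set G to homogeneous polynomials
  set T : Set (MvPolynomial (Fin m) (ZMod 2)) :=
    {p | (p.IsHomogeneous 1 ∨ p.IsHomogeneous 2)
      ∧ Ideal.Quotient.mk (extIdeal m S) p ∈ G} with hTdef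
  have himg : Ideal.Quotient.mk (extIdeal m S) '' T = G := by
    apply Set.Subset.antisymm
    · rintro _ ⟨p, hp, rfl⟩
      exact hp.2
    · intro g hg
      rcases hG g hg with h | h
      · obtain ⟨p, hp, hpe⟩ := h
        have hpe' : Ideal.Quotient.mk (extIdeal m S) p = g := by
          simpa [Ideal.Quotient.mkₐ_eq_mk] using hpe
        exact ⟨p, ⟨Or.inl ((mem_homogeneousSubmodule _ _).mp hp), hpe' ▸ hg⟩, hpe'⟩
      · obtain ⟨p, hp, hpe⟩ := h
        have hpe' : Ideal.Quotient.mk (extIdeal m S) p = g := by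
          simpa [Ideal.Quotient.mkₐ_eq_mk] using hpe
        exact ⟨p, ⟨Or.inr ((mem_homogeneousSubmodule _ _).mp hp), hpe' ▸ hg⟩, hpe'⟩
  have hz2 : z ∈ Ideal.span T ⊔ extIdeal m S := by
    have hmapT : Ideal.span G
        = Ideal.map (Ideal.Quotient.mk (extIdeal m S)) (Ideal.span T) := by
      rw [Ideal.map_span, himg]
    have hcm : Ideal.comap (Ideal.Quotient.mk (extIdeal m S))
        (Ideal.map (Ideal.Quotient.mk (extIdeal m S)) (Ideal.span T))
        = Ideal.span T ⊔ extIdeal m S := by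
      rw [Ideal.comap_map_of_surjective _ Ideal.Quotient.mk_surjective,
        ← RingHom.ker_eq_comap_bot, Ideal.mk_ker]
    rw [← hcm]
    rw [hmapT] at hzker
    exact Ideal.mem_comap.mpr hzker
  -- everything in the kernel maps into the squares ideal
  have hsub : Ideal.span T ⊔ extIdeal m S
      ≤ Ideal.comap τ (sqIdeal (n+1)) := by
    refine sup_le ?_ ?_
    · rw [Ideal.span_le]
      intro t ht
      have htEI : τ t ∈ extIdeal (n+1) (boundarySimplex n) :=
        (hkerEI t).mp (Ideal.subset_span ht.2)
      rcases ht.1 with h1 | h2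
      · show τ t ∈ sqIdeal (n+1)
        rw [extIdeal_homog_one hn (htau h1) htEI]
        exact (sqIdeal (n+1)).zero_mem
      · exact extIdeal_homog_two hn (htau h2) htEI
    · rw [extIdeal, Ideal.span_le]
      rintro g (⟨v, rfl⟩ | ⟨s, hs, rfl⟩)
      · have hmemE : (X v ^ 2 : MvPolynomial (Fin m) (ZMod 2)) ∈ extIdeal m S :=
          Ideal.subset_span (Or.inl ⟨v, rfl⟩)
        have hEI : τ (X v ^ 2) ∈ extIdeal (n+1) (boundarySimplex n) := by
          rw [← hkerEI, Ideal.Quotient.eq_zero_iff_mem.mpr hmemE]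
          exact Ideal.zero_mem _
        exact extIdeal_homog_two hn
          (htau (by simpa using (isHomogeneous_X (ZMod 2) v).pow 2)) hEI
      · have hvw : ∃ v ∈ s, ∃ w ∈ s, v ≠ w ∧ ({v, w} : Finset (Fin m)) ∉ S := by
          by_contra hcon
          push_neg at hcon
          exact hs (hflag s (fun v hv w hw hne => hcon v hv w hw hne))
        obtain ⟨v, hv, w, hw, hne, hnotS⟩ := hvw
        have hw' : w ∈ s.erase v := Finset.mem_erase.mpr ⟨fun h => hne h.symm, hw⟩
        have hprod : (∏ i ∈ s, (X i : MvPolynomial (Fin m) (ZMod 2)))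
            = (X v * X w) * ∏ i ∈ (s.erase v).erase w, X i := by
          rw [← Finset.mul_prod_erase s _ hv, ← Finset.mul_prod_erase (s.erase v) _ hw',
            mul_assoc]
        show τ (∏ i ∈ s, X i) ∈ sqIdeal (n+1)
        rw [hprod, map_mul]
        refine Ideal.mul_mem_right _ _ ?_
        have hmemE : (X v * X w : MvPolynomial (Fin m) (ZMod 2)) ∈ extIdeal m S :=
          Ideal.subset_span (Or.inr ⟨{v, w}, hnotS, (Finset.prod_pair hne).symm⟩)
        have hEI : τ (X v * X w) ∈ extIdeal (n+1) (boundarySimplex n) := by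
          rw [← hkerEI, Ideal.Quotient.eq_zero_iff_mem.mpr hmemE]
          exact Ideal.zero_mem _
        exact extIdeal_homog_two hn
          (htau (by simpa using (isHomogeneous_X (ZMod 2) v).mul (isHomogeneous_X (ZMod 2) w)))
          hEI
  have : τ z ∈ sqIdeal (n+1) := hsub hz2
  rw [hτz] at this
  exact prod_X_not_mem_sqIdeal (n+1) this
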